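/- For every closed term t of a constructor rewrite system R, the tree term graph 𝔾(t) is constructor-shared; moreover, if a closed term graph G is constructor-shared and G rewrites in one step to I in the graph rewrite system corresponding to R, then I is constructor-shared. -/

import Mathlib

/-- First-order terms over a signature with constructors `C` and function symbols `F`,
with variables drawn from ℕ. -/
inductive GTerm (C F : Type) : Type
  | var : ℕ → GTerm C F
  | con : C → List (GTerm C F) → GTerm C F
  | fn : F → List (GTerm C F) → GTerm C F

namespace GTerm

variable {C F : Type}

/-- Constructor terms: built only from constructors. -/
inductive IsConTerm : GTerm C F → Prop
  | con {c ts} : (∀ t ∈ ts, IsConTerm t) → IsConTerm (con c ts)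

/-- Patterns: built from constructors and variables. -/
inductive IsPattern : GTerm C F → Prop
  | var {x} : IsPattern (var x)
  | con {c ts} : (∀ t ∈ ts, IsPattern t) → IsPattern (con c ts)

/-- Arity discipline: every symbol is applied to as many arguments as its arity. -/
inductive WFT (arc : C → ℕ) (arf : F → ℕ) : GTerm C F → Prop
  | var {x} : WFT arc arf (var x)
  | con {c ts} : ts.length = arc c → (∀ t ∈ ts, WFT arc arf t) → WFT arc arf (con c ts)
  | fn {f ts} : ts.length = arf f → (∀ t ∈ ts, WFT arc arf t) → WFT arc arf (fn f ts)

/-- The list of variable occurrences of a term, in left-to-right order. -/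
def varsL : GTerm C F → List ℕ
  | var x => [x]
  | con _ ts => ts.attach.flatMap (fun t => varsL t.1)
  | fn _ ts => ts.attach.flatMap (fun t => varsL t.1)
decreasing_by
  all_goals simp_wf
  all_goals have := List.sizeOf_lt_of_mem t.2
  all_goals omega

/-- Substitution of terms for variables. -/
def gsubst (σ : ℕ → Option (GTerm C F)) : GTerm C F → GTerm C F
  | var y => (σ y).getD (var y)
  | con c ts => con c (ts.attach.map (fun t => gsubst σ t.1))
  | fn f ts => fn f (ts.attach.map (fun t => gsubst σ t.1))
decreasing_by
  all_goals simp_wf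
  all_goals have := List.sizeOf_lt_of_mem t.2
  all_goals omega

end GTerm

/-- A constructor rewrite rule f(p₁,…,pₙ) → rhs. -/
structure GRule (C F : Type) where
  f : F
  args : List (GTerm C F)
  rhs : GTerm C F

/-- Well-formedness of a rule: the lhs arguments are patterns respecting the
arities, the lhs is linear, and the rhs is a well-formed term all of whose
variables occur in the lhs. -/
def GRule.WF {C F : Type} (arc : C → ℕ) (arf : F → ℕ) (r : GRule C F) : Prop :=
  (∀ p ∈ r.args, GTerm.IsPattern p) ∧
  r.args.length = arf r.f ∧
  (∀ p ∈ r.args, GTerm.WFT arc arf p) ∧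
  (r.args.flatMap GTerm.varsL).Nodup ∧
  GTerm.WFT arc arf r.rhs ∧
  (∀ x ∈ r.rhs.varsL, x ∈ r.args.flatMap GTerm.varsL)

/-- Non-overlapping rules: the left-hand sides of distinct rules cannot be
instantiated (by constructor terms) to a common term. -/
def NonOverlapping {C F : Type} (Rs : Set (GRule C F)) : Prop :=
  ∀ r₁ ∈ Rs, ∀ r₂ ∈ Rs, r₁ ≠ r₂ → r₁.f = r₂.f →
    ¬ ∃ σ τ : ℕ → Option (GTerm C F),
        (∀ x t, σ x = some t → GTerm.IsConTerm t) ∧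
        (∀ x t, τ x = some t → GTerm.IsConTerm t) ∧
        r₁.args.map (GTerm.gsubst σ) = r₂.args.map (GTerm.gsubst τ)

/-- An orthogonal constructor rewrite system. -/
def Orthogonal {C F : Type} (arc : C → ℕ) (arf : F → ℕ) (Rs : Set (GRule C F)) : Prop :=
  (∀ r ∈ Rs, GRule.WF arc arf r) ∧ NonOverlapping Rs

/-- One-step (call-by-value) rewriting: a rule instantiated by constructor terms
fires, closed under arbitrary contexts. -/
inductive XStep {C F : Type} (Rs : Set (GRule C F)) : GTerm C F → GTerm C F → Prop
  | root {r : GRule C F} {σ : ℕ → Option (GTerm C F)} :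
      r ∈ Rs → (∀ x t, σ x = some t → GTerm.IsConTerm t) →
      XStep Rs (GTerm.fn r.f (r.args.map (GTerm.gsubst σ))) (GTerm.gsubst σ r.rhs)
  | conCtx {c ts₁ t t' ts₂} : XStep Rs t t' →
      XStep Rs (GTerm.con c (ts₁ ++ t :: ts₂)) (GTerm.con c (ts₁ ++ t' :: ts₂))
  | fnCtx {f ts₁ t t' ts₂} : XStep Rs t t' →
      XStep Rs (GTerm.fn f (ts₁ ++ t :: ts₂)) (GTerm.fn f (ts₁ ++ t' :: ts₂))

/-- Normal forms of the rewrite system. -/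
def XNormal {C F : Type} (Rs : Set (GRule C F)) (t : GTerm C F) : Prop :=
  ¬ ∃ u, XStep Rs t u

/-- Closed terms: no variables. -/
def GClosed {C F : Type} (t : GTerm C F) : Prop := t.varsL = []

open scoped Classical

/-- A term graph over a signature with constructors `C` and function symbols `F`:
a finite set of vertices (natural numbers), a partial labelling, an ordered list of
successors for every vertex (empty for unlabelled vertices), and a root. -/
structure TGraph (C F : Type) where
  V : Finset ℕ
  lab : ℕ → Option (C ⊕ F)
  succ : ℕ → List ℕ
  root : ℕ

namespace TGraph

variable {C F : Type}

/-- The arity of a symbol. -/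
def arity (arc : C → ℕ) (arf : F → ℕ) : C ⊕ F → ℕ := Sum.elim arc arf

/-- The edge relation of a graph. -/
def edge (G : TGraph C F) (a b : ℕ) : Prop := a ∈ G.V ∧ b ∈ G.succ a

/-- Reachability in a graph. -/
def Reach (G : TGraph C F) (a b : ℕ) : Prop := Relation.ReflTransGen G.edge a b

/-- Well-formed graphs: the root is a vertex, edges stay inside the vertex set,
the out-degree of every vertex matches the arity of its label (0 if unlabelled),
and the graph is acyclic. -/
structure WFG (arc : C → ℕ) (arf : F → ℕ) (G : TGraph C F) : Prop where
  root_mem : G.root ∈ G.V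
  succ_mem : ∀ v ∈ G.V, ∀ w ∈ G.succ v, w ∈ G.V
  arity_ok : ∀ v ∈ G.V, (G.succ v).length = ((G.lab v).map (arity arc arf)).getD 0
  acyclic : ∀ v, ¬ Relation.TransGen G.edge v v

/-- A graph is closed if its labelling is total on vertices. -/
def ClosedG (G : TGraph C F) : Prop := ∀ v ∈ G.V, (G.lab v).isSome

/-- Follow a path (a list of child indices) from a vertex. -/
def follow (G : TGraph C F) : ℕ → List ℕ → Option ℕ
  | v, [] => some v
  | v, i :: is => (G.succ v)[i]?.bind (fun w => follow G w is)

/-- A graph is constructor-shared if every vertex reachable from the root by two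
distinct paths only reaches constructor-labelled vertices. -/
def ConstructorShared (G : TGraph C F) : Prop :=
  ∀ v (p q : List ℕ), follow G G.root p = some v → follow G G.root q = some v →
    p ≠ q → ∀ w, G.Reach v w → ∃ c, G.lab w = some (Sum.inl c)

/-- `Unfolds G v t`: the (closed) term `t` is the unfolding of the graph `G`
at vertex `v`. -/
inductive Unfolds (G : TGraph C F) : ℕ → GTerm C F → Prop
  | con {v : ℕ} {c : C} {ts : List (GTerm C F)} :
      G.lab v = some (Sum.inl c) → (G.succ v).length = ts.length →
      (∀ (j : ℕ) (h : j < ts.length), Unfolds G ((G.succ v).getD j 0) ts[j]) →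
      Unfolds G v (GTerm.con c ts)
  | fn {v : ℕ} {f : F} {ts : List (GTerm C F)} :
      G.lab v = some (Sum.inr f) → (G.succ v).length = ts.length →
      (∀ (j : ℕ) (h : j < ts.length), Unfolds G ((G.succ v).getD j 0) ts[j]) →
      Unfolds G v (GTerm.fn f ts)

/-- A homomorphism from the subgraph of `H` rooted at `l` into `G`. -/
def IsHom (H : TGraph C F) (l : ℕ) (G : TGraph C F) (φ : ℕ → ℕ) : Prop :=
  ∀ v, H.Reach l v → φ v ∈ G.V ∧
    ∀ a, H.lab v = some a →
      G.lab (φ v) = some a ∧ G.succ (φ v) = (H.succ v).map φ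

/-- A redex in `G` for a rule graph `(H, l, r)`: a homomorphism from the subgraph of
`H` rooted at `l` into `G` such that every path starting at the image of an
unlabelled (variable) node is a constructor path. -/
def IsRedex (H : TGraph C F) (l : ℕ) (G : TGraph C F) (φ : ℕ → ℕ) : Prop :=
  IsHom H l G φ ∧
  ∀ v, H.Reach l v → H.lab v = none →
    ∀ w, G.Reach (φ v) w → ∃ c, G.lab w = some (Sum.inl c)

/-- Firing a redex `(H, l, r, φ)` in `G`: the build phase copies the part of the
right-hand side subgraph not contained in the left-hand side subgraph (fresh
vertices are obtained by adding the offset `off`), the redirection phase redirects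
all edges pointing to `φ l` towards (the copy of) `r` and re-roots if necessary,
and the garbage-collection phase keeps only the vertices reachable from the new
root. -/
noncomputable def fire (G : TGraph C F) (H : TGraph C F) (l r : ℕ) (φ : ℕ → ℕ) :
    TGraph C F :=
  let off := G.V.sup id + 1
  let ψ : ℕ → ℕ := fun v => if H.Reach l v then φ v else v + off
  let tgt := ψ r
  let rd : ℕ → ℕ := fun w => if w = φ l then tgt else w
  let copies := (H.V.filter (fun v => H.Reach r v ∧ ¬ H.Reach l v)).image (· + off)
  let lab1 : ℕ → Option (C ⊕ F) :=
    fun v => if v ∈ copies then H.lab (v - off) else G.lab v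
  let succ1 : ℕ → List ℕ :=
    fun v => if v ∈ copies then ((H.succ (v - off)).map ψ).map rd
             else (G.succ v).map rd
  let root1 := rd G.root
  let V1 := G.V ∪ copies
  { V := V1.filter
      (fun v => Relation.ReflTransGen (fun a b => a ∈ V1 ∧ b ∈ succ1 a) root1 v),
    lab := lab1, succ := succ1, root := root1 }

end TGraph

/-- State of the tree-graph builder. -/
structure GB (C F : Type) where
  next : ℕ
  lab : ℕ → Option (C ⊕ F)
  succ : ℕ → List ℕ

mutual
/-- Build the tree of a term on top of a builder state, the (already allocated)
node `vm x` standing for the variable `x`; returns the root of the new tree. -/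
def buildT {C F : Type} (vm : ℕ → ℕ) : GTerm C F → GB C F → ℕ × GB C F
  | .var x, s => (vm x, s)
  | .con c ts, s =>
      let p := buildL vm ts s
      (p.2.next,
        ⟨p.2.next + 1,
         fun v => if v = p.2.next then some (Sum.inl c) else p.2.lab v,
         fun v => if v = p.2.next then p.1 else p.2.succ v⟩)
  | .fn f ts, s =>
      let p := buildL vm ts s
      (p.2.next,
        ⟨p.2.next + 1,
         fun v => if v = p.2.next then some (Sum.inr f) else p.2.lab v,
         fun v => if v = p.2.next then p.1 else p.2.succ v⟩)

def buildL {C F : Type} (vm : ℕ → ℕ) : List (GTerm C F) → GB C F → List ℕ × GB C F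
  | [], s => ([], s)
  | t :: ts, s =>
      let p := buildT vm t s
      let q := buildL vm ts p.2
      (p.1 :: q.1, q.2)
end

/-- The term graph of a term: one unlabelled node for each variable (shared), and
a fresh node for every other symbol occurrence.  For a closed term this is the
tree term graph 𝔾(t). -/
def graphOfTerm {C F : Type} (t : GTerm C F) : TGraph C F :=
  let vs := t.varsL.dedup
  let vm : ℕ → ℕ := fun x => vs.idxOf x
  let p := buildT vm t ⟨vs.length, fun _ => none, fun _ => []⟩
  { V := Finset.range p.2.next, lab := p.2.lab, succ := p.2.succ, root := p.1 }

/-- The graph rewrite rule corresponding to a term rewrite rule: the trees of the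
left- and right-hand sides, sharing the nodes representing the same variable.
Returns the rule graph together with its left and right roots. -/
def ruleGraph {C F : Type} (r : GRule C F) : TGraph C F × ℕ × ℕ :=
  let lhs : GTerm C F := GTerm.fn r.f r.args
  let vs := lhs.varsL.dedup
  let vm : ℕ → ℕ := fun x => vs.idxOf x
  let p := buildT vm lhs ⟨vs.length, fun _ => none, fun _ => []⟩
  let q := buildT vm r.rhs p.2
  ({ V := Finset.range q.2.next, lab := q.2.lab, succ := q.2.succ, root := p.1 },
   p.1, q.1)

/-- One-step graph rewriting in the graph rewrite system corresponding to the
rules `Rs`. -/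
inductive GStep {C F : Type} (Rs : Set (GRule C F)) : TGraph C F → TGraph C F → Prop
  | mk {G : TGraph C F} {r : GRule C F} {φ : ℕ → ℕ} :
      r ∈ Rs →
      TGraph.IsRedex (ruleGraph r).1 (ruleGraph r).2.1 G φ →
      GStep Rs G (TGraph.fire G (ruleGraph r).1 (ruleGraph r).2.1 (ruleGraph r).2.2 φ)

/-- Graph normal forms: no redex can be fired. -/
def GNormal {C F : Type} (Rs : Set (GRule C F)) (G : TGraph C F) : Prop :=
  ¬ ∃ I, GStep Rs G I

/-! ### Auxiliary lemmas -/

section Aux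

variable {C F : Type}

theorem GTerm.varsL_var (x : ℕ) : (GTerm.var (C:=C) (F:=F) x).varsL = [x] := by
  rw [GTerm.varsL]

theorem GTerm.varsL_con (c : C) (ts : List (GTerm C F)) :
    (GTerm.con c ts).varsL = ts.flatMap GTerm.varsL := by
  rw [GTerm.varsL]; simp [List.flatMap]

theorem GTerm.varsL_fn (f : F) (ts : List (GTerm C F)) :
    (GTerm.fn f ts).varsL = ts.flatMap GTerm.varsL := by
  rw [GTerm.varsL]; simp [List.flatMap]

/-- The reachability relation used in builder specifications. -/
def brel (n : ℕ) (σ : ℕ → List ℕ) (a b : ℕ) : Prop := a < n ∧ b ∈ σ a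

theorem brel_mono {n n' : ℕ} {σ σ' : ℕ → List ℕ} (hn : n ≤ n')
    (hσ : ∀ a, a < n → σ' a = σ a) {u v : ℕ}
    (h : Relation.ReflTransGen (brel n σ) u v) :
    Relation.ReflTransGen (brel n' σ') u v := by
  induction h with
  | refl => exact .refl
  | tail _ hbc ih =>
      exact ih.tail ⟨lt_of_lt_of_le hbc.1 hn, by rw [hσ _ hbc.1]; exact hbc.2⟩

/-- The evolution of the builder state. -/
structure Evol (n₀ : ℕ) (vars : List ℕ) (vm : ℕ → ℕ) (s s' : GB C F) : Prop where
  next_le : s.next ≤ s'.next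
  stable : ∀ v, v < s.next ∨ s'.next ≤ v → s'.lab v = s.lab v ∧ s'.succ v = s.succ v
  newNodes : ∀ v, s.next ≤ v → v < s'.next → (s'.lab v).isSome ∧
      ∀ w ∈ s'.succ v, w < v ∧ (s.next ≤ w ∨ (w < n₀ ∧ ∃ x ∈ vars, w = vm x))
  uniq : ∀ u₁ (i₁ : ℕ) u₂ (i₂ : ℕ) w, s.next ≤ u₁ → u₁ < s'.next → s.next ≤ u₂ → u₂ < s'.next →
      s.next ≤ w → (s'.succ u₁)[i₁]? = some w → (s'.succ u₂)[i₂]? = some w →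
      u₁ = u₂ ∧ i₁ = i₂

/-- Specification of `buildT`. -/
structure BTspec (n₀ : ℕ) (vm : ℕ → ℕ) (t : GTerm C F) (s : GB C F)
    (r : ℕ × GB C F) : Prop where
  evol : Evol n₀ t.varsL vm s r.2
  root_lt : r.1 < r.2.next
  root_cases : (∃ x, t = GTerm.var x ∧ r.1 = vm x ∧ r.2 = s) ∨
      (r.1 + 1 = r.2.next ∧ s.next ≤ r.1)
  root_not_child : s.next ≤ r.1 → ∀ u, s.next ≤ u → u < r.2.next → r.1 ∉ r.2.succ u
  reach_var : ∀ x ∈ t.varsL, Relation.ReflTransGen (brel r.2.next r.2.succ) r.1 (vm x)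
  lab_con : ∀ c ts, t = GTerm.con c ts → r.2.lab r.1 = some (Sum.inl c)
  lab_fn : ∀ f ts, t = GTerm.fn f ts → r.2.lab r.1 = some (Sum.inr f)

/-- Specification of `buildL`. -/
structure BLspec (n₀ : ℕ) (vm : ℕ → ℕ) (ts : List (GTerm C F)) (s : GB C F)
    (r : List ℕ × GB C F) : Prop where
  evol : Evol n₀ (ts.flatMap GTerm.varsL) vm s r.2
  roots : ∀ w ∈ r.1, w < r.2.next ∧
      (s.next ≤ w ∨ (w < n₀ ∧ ∃ x ∈ ts.flatMap GTerm.varsL, w = vm x))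
  roots_not_child : ∀ w ∈ r.1, s.next ≤ w → ∀ u, s.next ≤ u → u < r.2.next →
      w ∉ r.2.succ u
  roots_uniq : ∀ (j₁ j₂ : ℕ) w, s.next ≤ w → r.1[j₁]? = some w → r.1[j₂]? = some w →
      j₁ = j₂
  reach_var : ∀ x ∈ ts.flatMap GTerm.varsL, ∃ w ∈ r.1,
      Relation.ReflTransGen (brel r.2.next r.2.succ) w (vm x)

theorem buildT_var (vm : ℕ → ℕ) (x : ℕ) (s : GB C F) :
    buildT vm (.var x) s = (vm x, s) := by rw [buildT]

theorem buildT_con (vm : ℕ → ℕ) (c : C) (ts : List (GTerm C F)) (s : GB C F) :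
    buildT vm (.con c ts) s = ((buildL vm ts s).2.next,
      ⟨(buildL vm ts s).2.next + 1,
       fun v => if v = (buildL vm ts s).2.next then some (Sum.inl c)
                else (buildL vm ts s).2.lab v,
       fun v => if v = (buildL vm ts s).2.next then (buildL vm ts s).1
                else (buildL vm ts s).2.succ v⟩) := by rw [buildT]

theorem buildT_fn (vm : ℕ → ℕ) (f : F) (ts : List (GTerm C F)) (s : GB C F) :
    buildT vm (.fn f ts) s = ((buildL vm ts s).2.next,
      ⟨(buildL vm ts s).2.next + 1,
       fun v => if v = (buildL vm ts s).2.next then some (Sum.inr f)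
                else (buildL vm ts s).2.lab v,
       fun v => if v = (buildL vm ts s).2.next then (buildL vm ts s).1
                else (buildL vm ts s).2.succ v⟩) := by rw [buildT]

theorem buildL_nil (vm : ℕ → ℕ) (s : GB C F) : buildL vm ([] : List (GTerm C F)) s = ([], s) := by
  rw [buildL]

theorem buildL_cons (vm : ℕ → ℕ) (t : GTerm C F) (ts : List (GTerm C F)) (s : GB C F) :
    buildL vm (t :: ts) s = ((buildT vm t s).1 :: (buildL vm ts (buildT vm t s).2).1,
      (buildL vm ts (buildT vm t s).2).2) := by rw [buildL]

theorem Evol.comp {n₀ : ℕ} {A B AB : List ℕ} {vm : ℕ → ℕ} {s s₁ s₂ : GB C F}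
    (h1 : Evol n₀ A vm s s₁) (h2 : Evol n₀ B vm s₁ s₂) (hn : n₀ ≤ s.next)
    (hA : ∀ x ∈ A, x ∈ AB) (hB : ∀ x ∈ B, x ∈ AB) : Evol n₀ AB vm s s₂ := by
  have hle1 := h1.next_le
  have hle2 := h2.next_le
  refine ⟨le_trans hle1 hle2, ?_, ?_, ?_⟩
  · intro v hv
    have e2 := h2.stable v (by omega)
    have e1 := h1.stable v (by omega)
    exact ⟨e2.1.trans e1.1, e2.2.trans e1.2⟩
  · intro v hv1 hv2
    by_cases hv : v < s₁.next
    · have e2 := h2.stable v (Or.inl hv)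
      have := h1.newNodes v hv1 hv
      refine ⟨e2.1 ▸ this.1, ?_⟩
      intro w hw
      rw [e2.2] at hw
      obtain ⟨hlt, hc⟩ := this.2 w hw
      refine ⟨hlt, ?_⟩
      rcases hc with h | ⟨h, x, hx, hxe⟩
      · exact Or.inl h
      · exact Or.inr ⟨h, x, hA x hx, hxe⟩
    · have := h2.newNodes v (by omega) hv2
      refine ⟨this.1, ?_⟩
      intro w hw
      obtain ⟨hlt, hc⟩ := this.2 w hw
      refine ⟨hlt, ?_⟩
      rcases hc with h | ⟨h, x, hx, hxe⟩
      · exact Or.inl (by omega)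
      · exact Or.inr ⟨h, x, hB x hx, hxe⟩
  · intro u₁ i₁ u₂ i₂ w hu₁ hu₁' hu₂ hu₂' hw hs₁ hs₂
    have key : ∀ u (i : ℕ), s.next ≤ u → u < s₂.next → (s₂.succ u)[i]? = some w →
        (u < s₁.next ↔ w < s₁.next) := by
      intro u i hu hu' hg
      have hmem : w ∈ s₂.succ u := List.mem_of_getElem? hg
      by_cases huc : u < s₁.next
      · have e2 := (h2.stable u (Or.inl huc)).2
        rw [e2] at hmem
        have := (h1.newNodes u hu huc).2 w hmem
        simp only [huc, true_iff]
        omega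
      · have := (h2.newNodes u (by omega) hu').2 w hmem
        rcases this.2 with h | ⟨h, _⟩
        · simp only [huc, false_iff]; omega
        · omega
    have k1 := key u₁ i₁ hu₁ hu₁' hs₁
    have k2 := key u₂ i₂ hu₂ hu₂' hs₂
    by_cases hwc : w < s₁.next
    · have hu₁c : u₁ < s₁.next := k1.mpr hwc
      have hu₂c : u₂ < s₁.next := k2.mpr hwc
      rw [(h2.stable u₁ (Or.inl hu₁c)).2] at hs₁
      rw [(h2.stable u₂ (Or.inl hu₂c)).2] at hs₂
      exact h1.uniq u₁ i₁ u₂ i₂ w hu₁ hu₁c hu₂ hu₂c hw hs₁ hs₂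
    · have hu₁c : ¬ u₁ < s₁.next := fun h => hwc (k1.mp h)
      have hu₂c : ¬ u₂ < s₁.next := fun h => hwc (k2.mp h)
      exact h2.uniq u₁ i₁ u₂ i₂ w (by omega) hu₁' (by omega) hu₂' (by omega) hs₁ hs₂

theorem Evol.intro' {n₀ : ℕ} {vars : List ℕ} {vm : ℕ → ℕ} {s : GB C F}
    {nx : ℕ} {lb : ℕ → Option (C ⊕ F)} {sc : ℕ → List ℕ}
    (h1 : s.next ≤ nx)
    (h2 : ∀ v, v < s.next ∨ nx ≤ v → lb v = s.lab v ∧ sc v = s.succ v)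
    (h3 : ∀ v, s.next ≤ v → v < nx → (lb v).isSome ∧
      ∀ w ∈ sc v, w < v ∧ (s.next ≤ w ∨ (w < n₀ ∧ ∃ x ∈ vars, w = vm x)))
    (h4 : ∀ u₁ (i₁ : ℕ) u₂ (i₂ : ℕ) w, s.next ≤ u₁ → u₁ < nx → s.next ≤ u₂ → u₂ < nx →
      s.next ≤ w → (sc u₁)[i₁]? = some w → (sc u₂)[i₂]? = some w →
      u₁ = u₂ ∧ i₁ = i₂) :
    Evol n₀ vars vm s ⟨nx, lb, sc⟩ := ⟨h1, h2, h3, h4⟩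

theorem BTspec.intro' {n₀ : ℕ} {vm : ℕ → ℕ} {t : GTerm C F} {s : GB C F}
    {a nx : ℕ} {lb : ℕ → Option (C ⊕ F)} {sc : ℕ → List ℕ}
    (evol : Evol n₀ t.varsL vm s ⟨nx, lb, sc⟩)
    (root_lt : a < nx)
    (root_cases : (∃ x, t = GTerm.var x ∧ a = vm x ∧ (⟨nx, lb, sc⟩ : GB C F) = s) ∨
      (a + 1 = nx ∧ s.next ≤ a))
    (rnc : s.next ≤ a → ∀ u, s.next ≤ u → u < nx → a ∉ sc u)
    (reach : ∀ x ∈ t.varsL, Relation.ReflTransGen (brel nx sc) a (vm x))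
    (lc : ∀ c ts, t = GTerm.con c ts → lb a = some (Sum.inl c))
    (lf : ∀ f ts, t = GTerm.fn f ts → lb a = some (Sum.inr f)) :
    BTspec n₀ vm t s (a, ⟨nx, lb, sc⟩) := ⟨evol, root_lt, root_cases, rnc, reach, lc, lf⟩

theorem BTspec.intro {n₀ : ℕ} {vm : ℕ → ℕ} {t : GTerm C F} {s : GB C F} {a : ℕ} {b : GB C F}
    (evol : Evol n₀ t.varsL vm s b)
    (root_lt : a < b.next)
    (root_cases : (∃ x, t = GTerm.var x ∧ a = vm x ∧ b = s) ∨ (a + 1 = b.next ∧ s.next ≤ a))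
    (rnc : s.next ≤ a → ∀ u, s.next ≤ u → u < b.next → a ∉ b.succ u)
    (reach : ∀ x ∈ t.varsL, Relation.ReflTransGen (brel b.next b.succ) a (vm x))
    (lc : ∀ c ts, t = GTerm.con c ts → b.lab a = some (Sum.inl c))
    (lf : ∀ f ts, t = GTerm.fn f ts → b.lab a = some (Sum.inr f)) :
    BTspec n₀ vm t s (a, b) := ⟨evol, root_lt, root_cases, rnc, reach, lc, lf⟩

theorem BLspec.intro {n₀ : ℕ} {vm : ℕ → ℕ} {ts : List (GTerm C F)} {s : GB C F}
    {rs : List ℕ} {b : GB C F}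
    (evol : Evol n₀ (ts.flatMap GTerm.varsL) vm s b)
    (roots : ∀ w ∈ rs, w < b.next ∧
      (s.next ≤ w ∨ (w < n₀ ∧ ∃ x ∈ ts.flatMap GTerm.varsL, w = vm x)))
    (rnc : ∀ w ∈ rs, s.next ≤ w → ∀ u, s.next ≤ u → u < b.next → w ∉ b.succ u)
    (runiq : ∀ (j₁ j₂ : ℕ) w, s.next ≤ w → rs[j₁]? = some w → rs[j₂]? = some w → j₁ = j₂)
    (reach : ∀ x ∈ ts.flatMap GTerm.varsL, ∃ w ∈ rs,
      Relation.ReflTransGen (brel b.next b.succ) w (vm x)) :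
    BLspec n₀ vm ts s (rs, b) := ⟨evol, roots, rnc, runiq, reach⟩

mutual
theorem buildT_spec (vm : ℕ → ℕ) (n₀ : ℕ) (t : GTerm C F) (s : GB C F)
    (hn : n₀ ≤ s.next) (hvm : ∀ x ∈ t.varsL, vm x < n₀) :
    BTspec n₀ vm t s (buildT vm t s) := by
  cases t with
  | var x =>
      rw [buildT_var]
      try dsimp only
      have hx : vm x < n₀ := hvm x (by rw [GTerm.varsL_var]; exact List.mem_singleton.2 rfl)
      refine BTspec.intro ⟨le_refl _, fun v _ => ⟨rfl, rfl⟩,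
        fun v h1 h2 => absurd (lt_of_le_of_lt h1 h2) (lt_irrefl _),
        fun u₁ i₁ u₂ i₂ w h1 h2 => absurd (lt_of_le_of_lt h1 h2) (lt_irrefl _)⟩
        (lt_of_lt_of_le hx hn)
        (Or.inl ⟨x, rfl, rfl, rfl⟩)
        (fun h => absurd (lt_of_le_of_lt h (lt_of_lt_of_le hx hn)) (lt_irrefl _)) ?_ ?_ ?_
      · intro y hy
        rw [GTerm.varsL_var] at hy
        rcases List.mem_singleton.1 hy with rfl
        exact .refl
      · intro c ts h; exact absurd h (by simp)
      · intro f ts h; exact absurd h (by simp)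
  | con c ts =>
      rw [buildT_con]
      try dsimp only
      have hvm' : ∀ x ∈ ts.flatMap GTerm.varsL, vm x < n₀ := by
        intro x hx; exact hvm x (by rw [GTerm.varsL_con]; exact hx)
      have S := buildL_spec vm n₀ ts s hn hvm'
      set P := buildL vm ts s with hP
      have hsl : s.next ≤ P.2.next := S.evol.next_le
      set m := P.2.next with hm
      refine BTspec.intro' (Evol.intro' (by omega) ?_ ?_ ?_) (by omega)
        (Or.inr ⟨rfl, by omega⟩) ?_ ?_ ?_ ?_
      · intro v hv
        have hvne : v ≠ m := by omega
        simp only [hvne, if_false]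
        exact S.evol.stable v (by omega)
      · intro v hv1 hv2
        by_cases hvm2 : v = m
        · subst hvm2
          simp only [if_pos rfl]
          refine ⟨by simp, ?_⟩
          intro w hw
          obtain ⟨hwlt, hwc⟩ := S.roots w hw
          refine ⟨by omega, ?_⟩
          rcases hwc with h | ⟨h, x, hx, hxe⟩
          · exact Or.inl h
          · exact Or.inr ⟨h, x, by rw [GTerm.varsL_con]; exact hx, hxe⟩
        · simp only [hvm2, if_false]
          have := S.evol.newNodes v hv1 (by omega)
          refine ⟨this.1, ?_⟩
          intro w hw
          obtain ⟨hlt, hc⟩ := this.2 w hw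
          refine ⟨hlt, ?_⟩
          rcases hc with h | ⟨h, x, hx, hxe⟩
          · exact Or.inl h
          · exact Or.inr ⟨h, x, by rw [GTerm.varsL_con]; exact hx, hxe⟩
      · intro u₁ i₁ u₂ i₂ w hu₁ hu₁' hu₂ hu₂' hw hs₁ hs₂
        by_cases h1 : u₁ = m <;> by_cases h2 : u₂ = m
        · exact ⟨h1.trans h2.symm, by
            subst h1; subst h2
            simp only [if_pos rfl] at hs₁ hs₂
            exact S.roots_uniq i₁ i₂ w hw hs₁ hs₂⟩
        · exfalso
          subst h1
          simp only [if_pos rfl] at hs₁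
          simp only [h2, if_false] at hs₂
          have hwm : w ∈ P.1 := List.mem_of_getElem? hs₁
          exact S.roots_not_child w hwm hw u₂ hu₂ (by omega) (List.mem_of_getElem? hs₂)
        · exfalso
          subst h2
          simp only [if_pos rfl] at hs₂
          simp only [h1, if_false] at hs₁
          have hwm : w ∈ P.1 := List.mem_of_getElem? hs₂
          exact S.roots_not_child w hwm hw u₁ hu₁ (by omega) (List.mem_of_getElem? hs₁)
        · simp only [h1, if_false] at hs₁
          simp only [h2, if_false] at hs₂
          exact S.evol.uniq u₁ i₁ u₂ i₂ w hu₁ (by omega) hu₂ (by omega) hw hs₁ hs₂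
      · intro _ u hu hu' hmem
        by_cases hum : u = m
        · subst hum
          simp only [if_pos rfl] at hmem
          have := (S.roots m hmem).1
          omega
        · simp only [hum, if_false] at hmem
          have := (S.evol.newNodes u hu (by omega)).2 m hmem
          omega
      · intro x hx
        rw [GTerm.varsL_con] at hx
        obtain ⟨w, hw, hreach⟩ := S.reach_var x hx
        refine Relation.ReflTransGen.head ⟨by omega, by simp only [if_pos rfl]; exact hw⟩ ?_
        refine brel_mono (by omega) ?_ hreach
        intro a ha
        have : a ≠ m := by omega
        simp only [this, if_false]
      · intro c' ts' h
        injection h with h1 h2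
        subst h1
        simp
      · intro f' ts' h; exact absurd h (by simp)
  | fn f ts =>
      rw [buildT_fn]
      try dsimp only
      have hvm' : ∀ x ∈ ts.flatMap GTerm.varsL, vm x < n₀ := by
        intro x hx; exact hvm x (by rw [GTerm.varsL_fn]; exact hx)
      have S := buildL_spec vm n₀ ts s hn hvm'
      set P := buildL vm ts s with hP
      have hsl : s.next ≤ P.2.next := S.evol.next_le
      set m := P.2.next with hm
      refine BTspec.intro' (Evol.intro' (by omega) ?_ ?_ ?_) (by omega)
        (Or.inr ⟨rfl, by omega⟩) ?_ ?_ ?_ ?_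
      · intro v hv
        have hvne : v ≠ m := by omega
        simp only [hvne, if_false]
        exact S.evol.stable v (by omega)
      · intro v hv1 hv2
        by_cases hvm2 : v = m
        · subst hvm2
          simp only [if_pos rfl]
          refine ⟨by simp, ?_⟩
          intro w hw
          obtain ⟨hwlt, hwc⟩ := S.roots w hw
          refine ⟨by omega, ?_⟩
          rcases hwc with h | ⟨h, x, hx, hxe⟩
          · exact Or.inl h
          · exact Or.inr ⟨h, x, by rw [GTerm.varsL_fn]; exact hx, hxe⟩
        · simp only [hvm2, if_false]
          have := S.evol.newNodes v hv1 (by omega)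
          refine ⟨this.1, ?_⟩
          intro w hw
          obtain ⟨hlt, hc⟩ := this.2 w hw
          refine ⟨hlt, ?_⟩
          rcases hc with h | ⟨h, x, hx, hxe⟩
          · exact Or.inl h
          · exact Or.inr ⟨h, x, by rw [GTerm.varsL_fn]; exact hx, hxe⟩
      · intro u₁ i₁ u₂ i₂ w hu₁ hu₁' hu₂ hu₂' hw hs₁ hs₂
        by_cases h1 : u₁ = m <;> by_cases h2 : u₂ = m
        · exact ⟨h1.trans h2.symm, by
            subst h1; subst h2
            simp only [if_pos rfl] at hs₁ hs₂
            exact S.roots_uniq i₁ i₂ w hw hs₁ hs₂⟩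
        · exfalso
          subst h1
          simp only [if_pos rfl] at hs₁
          simp only [h2, if_false] at hs₂
          have hwm : w ∈ P.1 := List.mem_of_getElem? hs₁
          exact S.roots_not_child w hwm hw u₂ hu₂ (by omega) (List.mem_of_getElem? hs₂)
        · exfalso
          subst h2
          simp only [if_pos rfl] at hs₂
          simp only [h1, if_false] at hs₁
          have hwm : w ∈ P.1 := List.mem_of_getElem? hs₂
          exact S.roots_not_child w hwm hw u₁ hu₁ (by omega) (List.mem_of_getElem? hs₁)
        · simp only [h1, if_false] at hs₁
          simp only [h2, if_false] at hs₂
          exact S.evol.uniq u₁ i₁ u₂ i₂ w hu₁ (by omega) hu₂ (by omega) hw hs₁ hs₂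
      · intro _ u hu hu' hmem
        by_cases hum : u = m
        · subst hum
          simp only [if_pos rfl] at hmem
          have := (S.roots m hmem).1
          omega
        · simp only [hum, if_false] at hmem
          have := (S.evol.newNodes u hu (by omega)).2 m hmem
          omega
      · intro x hx
        rw [GTerm.varsL_fn] at hx
        obtain ⟨w, hw, hreach⟩ := S.reach_var x hx
        refine Relation.ReflTransGen.head ⟨by omega, by simp only [if_pos rfl]; exact hw⟩ ?_
        refine brel_mono (by omega) ?_ hreach
        intro a ha
        have : a ≠ m := by omega
        simp only [this, if_false]
      · intro c' ts' h; exact absurd h (by simp)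
      · intro f' ts' h
        injection h with h1 h2
        subst h1
        simp

theorem buildL_spec (vm : ℕ → ℕ) (n₀ : ℕ) (ts : List (GTerm C F)) (s : GB C F)
    (hn : n₀ ≤ s.next) (hvm : ∀ x ∈ ts.flatMap GTerm.varsL, vm x < n₀) :
    BLspec n₀ vm ts s (buildL vm ts s) := by
  cases ts with
  | nil =>
      rw [buildL_nil]
      try dsimp only
      refine BLspec.intro ⟨le_refl _, fun v _ => ⟨rfl, rfl⟩,
        fun v h1 h2 => absurd (lt_of_le_of_lt h1 h2) (lt_irrefl _),
        fun u₁ i₁ u₂ i₂ w h1 h2 => absurd (lt_of_le_of_lt h1 h2) (lt_irrefl _)⟩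
        (by simp) (by simp) ?_ (by simp)
      intro j₁ j₂ w _ h
      simp at h
  | cons t ts =>
      rw [buildL_cons]
      try dsimp only
      have hvmt : ∀ x ∈ t.varsL, vm x < n₀ := fun x hx => hvm x (by
        simp only [List.flatMap_cons, List.mem_append]; exact Or.inl hx)
      have hvmts : ∀ x ∈ ts.flatMap GTerm.varsL, vm x < n₀ := fun x hx => hvm x (by
        simp only [List.flatMap_cons, List.mem_append]; exact Or.inr hx)
      have S1 := buildT_spec vm n₀ t s hn hvmt
      set P := buildT vm t s with hPd
      have hab : s.next ≤ P.2.next := S1.evol.next_le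
      have S2 := buildL_spec vm n₀ ts P.2 (by omega) hvmts
      set Q := buildL vm ts P.2 with hQd
      have hbc : P.2.next ≤ Q.2.next := S2.evol.next_le
      have hmemAB : ∀ x ∈ t.varsL, x ∈ (t :: ts).flatMap GTerm.varsL := by
        intro x hx; simp only [List.flatMap_cons, List.mem_append]; exact Or.inl hx
      have hmemBA : ∀ x ∈ ts.flatMap GTerm.varsL, x ∈ (t :: ts).flatMap GTerm.varsL := by
        intro x hx; simp only [List.flatMap_cons, List.mem_append]; exact Or.inr hx
      have hEv : Evol n₀ ((t :: ts).flatMap GTerm.varsL) vm s Q.2 :=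
        Evol.comp S1.evol S2.evol hn hmemAB hmemBA
      -- root of P classification
      have hProot : (P.1 < n₀ ∧ ∃ x ∈ t.varsL, P.1 = vm x) ∨
          (P.1 + 1 = P.2.next ∧ s.next ≤ P.1) := by
        rcases S1.root_cases with ⟨x, hx, hrt, _⟩ | h
        · left
          have hxv : x ∈ t.varsL := by rw [hx, GTerm.varsL_var]; exact List.mem_singleton.2 rfl
          exact ⟨hrt ▸ hvmt x hxv, x, hxv, hrt⟩
        · exact Or.inr h
      refine BLspec.intro hEv ?_ ?_ ?_ ?_
      · intro w hw
        rcases List.mem_cons.1 hw with rfl | hw'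
        · rcases hProot with ⟨h1, x, hx, he⟩ | ⟨h1, h2⟩
          · exact ⟨by omega, Or.inr ⟨h1, x, hmemAB x hx, he⟩⟩
          · exact ⟨by omega, Or.inl h2⟩
        · obtain ⟨h1, h2⟩ := S2.roots w hw'
          rcases h2 with h | ⟨h, x, hx, he⟩
          · exact ⟨h1, Or.inl (by omega)⟩
          · exact ⟨h1, Or.inr ⟨h, x, hmemBA x hx, he⟩⟩
      · intro w hw hws u hu hu' hmem
        rcases List.mem_cons.1 hw with rfl | hw'
        · rcases hProot with ⟨h1, _⟩ | ⟨h1, h2⟩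
          · omega
          · by_cases huc : u < P.2.next
            · rw [(S2.evol.stable u (Or.inl huc)).2] at hmem
              exact S1.root_not_child hws u hu huc hmem
            · have := (S2.evol.newNodes u (by omega) hu').2 P.1 hmem
              omega
        · have hwb : P.2.next ≤ w := by
            obtain ⟨_, h⟩ := S2.roots w hw'
            rcases h with h | ⟨h, _⟩
            · exact h
            · omega
          by_cases huc : u < P.2.next
          · rw [(S2.evol.stable u (Or.inl huc)).2] at hmem
            have := (S1.evol.newNodes u hu huc).2 w hmem
            omega
          · exact S2.roots_not_child w hw' (by omega) u (by omega) hu' hmem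
      · intro j₁ j₂ w hws h₁ h₂
        match j₁, j₂ with
        | 0, 0 => rfl
        | 0, j₂+1 =>
            exfalso
            simp only [List.getElem?_cons_zero] at h₁
            simp only [List.getElem?_cons_succ] at h₂
            have hPw : P.1 = w := by simpa using h₁
            have hw' : w ∈ Q.1 := List.mem_of_getElem? h₂
            have hwb : P.2.next ≤ w := by
              obtain ⟨_, h⟩ := S2.roots w hw'
              rcases h with h | ⟨h, _⟩
              · exact h
              · omega
            rcases hProot with ⟨h1, _⟩ | ⟨h1, h2⟩ <;> omega
        | j₁+1, 0 =>
            exfalso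
            simp only [List.getElem?_cons_zero] at h₂
            simp only [List.getElem?_cons_succ] at h₁
            have hPw : P.1 = w := by simpa using h₂
            have hw' : w ∈ Q.1 := List.mem_of_getElem? h₁
            have hwb : P.2.next ≤ w := by
              obtain ⟨_, h⟩ := S2.roots w hw'
              rcases h with h | ⟨h, _⟩
              · exact h
              · omega
            rcases hProot with ⟨h1, _⟩ | ⟨h1, h2⟩ <;> omega
        | j₁+1, j₂+1 =>
            simp only [List.getElem?_cons_succ] at h₁ h₂
            have hw' : w ∈ Q.1 := List.mem_of_getElem? h₁
            have hwb : P.2.next ≤ w := by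
              obtain ⟨_, h⟩ := S2.roots w hw'
              rcases h with h | ⟨h, _⟩
              · exact h
              · omega
            have := S2.roots_uniq j₁ j₂ w hwb h₁ h₂
            omega
      · intro x hx
        simp only [List.flatMap_cons, List.mem_append] at hx
        rcases hx with hx | hx
        · refine ⟨P.1, List.mem_cons_self, ?_⟩
          refine brel_mono hbc ?_ (S1.reach_var x hx)
          intro a ha
          exact (S2.evol.stable a (Or.inl ha)).2
        · obtain ⟨w, hw, hr⟩ := S2.reach_var x hx
          exact ⟨w, List.mem_cons_of_mem _ hw, hr⟩
end

theorem follow_nil (G : TGraph C F) (v : ℕ) : TGraph.follow G v [] = some v := by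
  rw [TGraph.follow]

theorem follow_cons (G : TGraph C F) (v i : ℕ) (is : List ℕ) :
    TGraph.follow G v (i :: is) = ((G.succ v)[i]?).bind (fun w => TGraph.follow G w is) := by
  rw [TGraph.follow]

theorem follow_append (G : TGraph C F) (p : List ℕ) (i : ℕ) (v : ℕ) :
    TGraph.follow G v (p ++ [i]) = (TGraph.follow G v p).bind fun u => (G.succ u)[i]? := by
  induction p generalizing v with
  | nil =>
      rw [List.nil_append, follow_cons, follow_nil, Option.bind_some]
      cases h : (G.succ v)[i]? with
      | none => rfl
      | some w => exact follow_nil G w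
  | cons j p ih =>
      rw [List.cons_append, follow_cons, follow_cons]
      cases h : (G.succ v)[j]? <;> simp [h, ih]

theorem unique_paths (G : TGraph C F)
    (Huniq : ∀ u₁ (i₁ : ℕ) u₂ (i₂ : ℕ) v, (G.succ u₁)[i₁]? = some v →
      (G.succ u₂)[i₂]? = some v → u₁ = u₂ ∧ i₁ = i₂)
    (Hroot : ∀ u (i : ℕ), (G.succ u)[i]? ≠ some G.root) :
    ∀ p q v, TGraph.follow G G.root p = some v → TGraph.follow G G.root q = some v → p = q := by
  intro p
  induction p using List.reverseRecOn with
  | nil =>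
      intro q v hp hq
      rw [follow_nil] at hp
      injection hp with hv
      subst hv
      rcases q.eq_nil_or_concat with rfl | ⟨q', j, rfl⟩
      · rfl
      · exfalso
        rw [List.concat_eq_append, follow_append] at hq
        rcases hu : TGraph.follow G G.root q' with _ | u <;> rw [hu] at hq
        · simp at hq
        · exact Hroot u j hq
  | append_singleton p' i ih =>
      intro q v hp hq
      rw [follow_append] at hp
      rcases hu : TGraph.follow G G.root p' with _ | u₁ <;> rw [hu] at hp
      · simp at hp
      rcases q.eq_nil_or_concat with rfl | ⟨q', j, rfl⟩
      · exfalso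
        rw [follow_nil] at hq
        injection hq with hv
        subst hv
        exact Hroot u₁ i hp
      · rw [List.concat_eq_append, follow_append] at hq
        rcases hu2 : TGraph.follow G G.root q' with _ | u₂ <;> rw [hu2] at hq
        · simp at hq
        obtain ⟨rfl, rfl⟩ := Huniq u₁ i u₂ j v hp hq
        rw [List.concat_eq_append, ih q' u₁ hu hu2]

theorem part1 (t : GTerm C F) (hcl : GClosed t) :
    TGraph.ConstructorShared (graphOfTerm t) := by
  have hcl' : t.varsL = [] := hcl
  have hlen : t.varsL.dedup.length = 0 := by rw [hcl']; rfl
  set vm : ℕ → ℕ := fun x => (t.varsL.dedup).idxOf x with hvm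
  set s₀ : GB C F := ⟨t.varsL.dedup.length, fun _ => none, fun _ => []⟩ with hs₀
  have S := buildT_spec vm (t.varsL.dedup.length) t s₀ (le_refl _)
    (by rw [hcl']; intro x hx; exact absurd hx List.not_mem_nil)
  have hsucc : (graphOfTerm t).succ = (buildT vm t s₀).2.succ := rfl
  have hroot : (graphOfTerm t).root = (buildT vm t s₀).1 := rfl
  have hs₀next : s₀.next = 0 := hlen
  set N := (buildT vm t s₀).2.next with hN
  have hcap : ∀ u, N ≤ u → (buildT vm t s₀).2.succ u = [] := by
    intro u hu
    have := (S.evol.stable u (Or.inr hu)).2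
    rw [this]
  have hrootc : (buildT vm t s₀).1 + 1 = N := by
    rcases S.root_cases with ⟨x, hx, _, _⟩ | ⟨h, _⟩
    · exfalso
      have : x ∈ t.varsL := by rw [hx, GTerm.varsL_var]; exact List.mem_singleton.2 rfl
      rw [hcl'] at this
      exact List.not_mem_nil this
    · exact h
  intro v p q hp hq hpq
  exfalso
  apply hpq
  apply unique_paths (graphOfTerm t) ?_ ?_ p q v hp hq
  · intro u₁ i₁ u₂ i₂ w h₁ h₂
    rw [hsucc] at h₁ h₂
    by_cases hu₁ : u₁ < N
    · by_cases hu₂ : u₂ < N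
      · exact S.evol.uniq u₁ i₁ u₂ i₂ w (by omega) hu₁ (by omega) hu₂ (by omega) h₁ h₂
      · rw [hcap u₂ (by omega)] at h₂
        simp at h₂
    · rw [hcap u₁ (by omega)] at h₁
      simp at h₁
  · intro u i h
    rw [hsucc] at h
    rw [hroot] at h
    by_cases hu : u < N
    · have hmem := List.mem_of_getElem? h
      have := (S.evol.newNodes u (by omega) hu).2 _ hmem
      omega
    · rw [hcap u (by omega)] at h
      simp at h

theorem fire_CS (G H : TGraph C F) (l rr : ℕ) (φ : ℕ → ℕ) (f0 : F) (m N : ℕ)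
    (hGroot : G.root ∈ G.V)
    (hGsucc : ∀ v ∈ G.V, ∀ w ∈ G.succ v, w ∈ G.V)
    (hcs : TGraph.ConstructorShared G)
    (hhom : TGraph.IsHom H l G φ)
    (hvarcone : ∀ v, H.Reach l v → H.lab v = none →
      ∀ w, G.Reach (φ v) w → ∃ c, G.lab w = some (Sum.inl c))
    (hlabl : H.lab l = some (Sum.inr f0))
    (hHV : H.V = Finset.range N)
    (hreach_l : ∀ v, H.Reach l v → v < m)
    (hrr_lt : rr < N)
    (hrr_cases : (H.Reach l rr ∧ H.lab rr = none) ∨ (m ≤ rr ∧ rr + 1 = N))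
    (hchild_hi : ∀ v, m ≤ v → v < N → ∀ w ∈ H.succ v,
      w < v ∧ (m ≤ w ∨ (H.Reach l w ∧ H.lab w = none)))
    (hreach_rr : ∀ v, H.Reach rr v → (m ≤ v ∧ v < N) ∨ H.Reach l v)
    (huniq_hi : ∀ u₁ (i₁ : ℕ) u₂ (i₂ : ℕ) w, m ≤ u₁ → u₁ < N → m ≤ u₂ → u₂ < N → m ≤ w →
      (H.succ u₁)[i₁]? = some w → (H.succ u₂)[i₂]? = some w → u₁ = u₂ ∧ i₁ = i₂) :
    TGraph.ConstructorShared (TGraph.fire G H l rr φ) := by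
  classical
  set off := G.V.sup id + 1 with hoffd
  set ψ : ℕ → ℕ := fun v => if H.Reach l v then φ v else v + off with hψd
  set tgt := ψ rr with htgtd
  set rd : ℕ → ℕ := fun w => if w = φ l then tgt else w with hrdd
  set copies := (H.V.filter (fun v => H.Reach rr v ∧ ¬ H.Reach l v)).image (· + off)
    with hcopd
  set lab1 : ℕ → Option (C ⊕ F) :=
    fun v => if v ∈ copies then H.lab (v - off) else G.lab v with hlab1d
  set succ1 : ℕ → List ℕ :=
    fun v => if v ∈ copies then ((H.succ (v - off)).map ψ).map rd
             else (G.succ v).map rd with hsucc1d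
  set root1 := rd G.root with hroot1d
  set V1 := G.V ∪ copies with hV1d
  set I := TGraph.fire G H l rr φ with hId
  have hIV : I.V = V1.filter
      (fun v => Relation.ReflTransGen (fun a b => a ∈ V1 ∧ b ∈ succ1 a) root1 v) := rfl
  have hIlab : I.lab = lab1 := rfl
  have hIsucc : I.succ = succ1 := rfl
  have hIroot : I.root = root1 := rfl
  set Good : ℕ → Prop :=
    fun v => ∀ w, I.Reach v w → ∃ c, I.lab w = some (Sum.inl c) with hGoodd
  set ConeCG : ℕ → Prop :=
    fun v => ∀ w, G.Reach v w → ∃ c, G.lab w = some (Sum.inl c) with hConed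
  -- basic arithmetic facts
  have hoff : ∀ v ∈ G.V, v < off := by
    intro v hv
    have : id v ≤ G.V.sup id := Finset.le_sup hv
    simp only [id] at this
    omega
  have hcop_elim : ∀ w ∈ copies, ∃ c, c ∈ H.V ∧ H.Reach rr c ∧ ¬ H.Reach l c ∧
      w = c + off := by
    intro w hw
    rw [hcopd] at hw
    obtain ⟨c, hc, rfl⟩ := Finset.mem_image.1 hw
    obtain ⟨h1, h2, h3⟩ := Finset.mem_filter.1 hc
    exact ⟨c, h1, h2, h3, rfl⟩
  have hcop_intro : ∀ c, c ∈ H.V → H.Reach rr c → ¬ H.Reach l c → c + off ∈ copies := by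
    intro c h1 h2 h3
    rw [hcopd]
    exact Finset.mem_image.2 ⟨c, Finset.mem_filter.2 ⟨h1, h2, h3⟩, rfl⟩
  have hcop_ge : ∀ w ∈ copies, off ≤ w := by
    intro w hw
    obtain ⟨c, _, _, _, rfl⟩ := hcop_elim w hw
    omega
  have hdisj : ∀ v ∈ G.V, v ∉ copies := by
    intro v hv hc
    have := hcop_ge v hc
    have := hoff v hv
    omega
  have hφlV : φ l ∈ G.V := (hhom l .refl).1
  have hφl_lab : G.lab (φ l) = some (Sum.inr f0) := ((hhom l .refl).2 _ hlabl).1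
  have hlab1G : ∀ v ∈ G.V, lab1 v = G.lab v := by
    intro v hv
    rw [hlab1d]
    simp only [hdisj v hv, if_false]
  have hsucc1G : ∀ v, v ∉ copies → succ1 v = (G.succ v).map rd := by
    intro v hv
    rw [hsucc1d]
    simp only [hv, if_false]
  -- constructor cones of G survive in I
  have hconeG : ∀ v, ConeCG v → v ∈ G.V → ∀ w, I.Reach v w → w ∈ G.V ∧ G.Reach v w := by
    intro v hcone hv w hw
    induction hw with
    | refl => exact ⟨hv, .refl⟩
    | tail hab hbc ih =>
        rename_i b c
        obtain ⟨hbG, hbR⟩ := ih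
        obtain ⟨hbI, hcmem⟩ := hbc
        rw [hIsucc, hsucc1G b (hdisj b hbG)] at hcmem
        obtain ⟨w₀, hw₀, rfl⟩ := List.mem_map.1 hcmem
        have hw₀R : G.Reach v w₀ := hbR.tail ⟨hbG, hw₀⟩
        obtain ⟨c', hc'⟩ := hcone w₀ hw₀R
        have hne : w₀ ≠ φ l := by
          intro h
          rw [h, hφl_lab] at hc'
          simp at hc'
        rw [hrdd]
        simp only [hne, if_false]
        exact ⟨hGsucc b hbG w₀ hw₀, hw₀R⟩
  have hGoodOf : ∀ v, v ∈ G.V → ConeCG v → Good v := by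
    intro v hv hcone
    rw [hGoodd]
    intro w hw
    obtain ⟨hwG, hwR⟩ := hconeG v hcone hv w hw
    obtain ⟨c, hc⟩ := hcone w hwR
    exact ⟨c, by rw [hIlab, hlab1G w hwG]; exact hc⟩
  have hvarGood : ∀ v, H.Reach l v → H.lab v = none → Good (φ v) := by
    intro v h1 h2
    exact hGoodOf (φ v) (hhom v h1).1 (hvarcone v h1 h2)
  have htgt_cases : (Good tgt ∧ tgt ∈ G.V) ∨
      (tgt = rr + off ∧ tgt ∈ copies ∧ ¬ H.Reach l rr ∧ m ≤ rr ∧ rr + 1 = N) := by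
    by_cases hR : H.Reach l rr
    · left
      have htgt : tgt = φ rr := by rw [htgtd, hψd]; simp only [hR, if_pos]
      rcases hrr_cases with ⟨_, hnone⟩ | ⟨hm, _⟩
      · rw [htgt]
        exact ⟨hvarGood rr hR hnone, (hhom rr hR).1⟩
      · exact absurd (hreach_l rr hR) (by omega)
    · right
      have htgt : tgt = rr + off := by rw [htgtd, hψd]; simp only [hR, if_false]
      rcases hrr_cases with ⟨h, _⟩ | ⟨hm, hN⟩
      · exact absurd h hR
      · refine ⟨htgt, htgt ▸ hcop_intro rr ?_ .refl hR, hR, hm, hN⟩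
        rw [hHV]
        exact Finset.mem_range.2 hrr_lt
  have hcopy_child : ∀ z ∈ copies, ∀ (i : ℕ) w, (succ1 z)[i]? = some w →
      (∃ w₀, (H.succ (z - off))[i]? = some w₀ ∧ m ≤ w₀ ∧ w₀ < N ∧ ¬ H.Reach l w₀ ∧
        w = w₀ + off ∧ w ∈ copies) ∨ (w ∈ G.V ∧ Good w) := by
    intro z hz i w hget
    obtain ⟨c, hcV, hcRr, hcRl, rfl⟩ := hcop_elim z hz
    have hzo : c + off - off = c := by omega
    have hcm : m ≤ c ∧ c < N := by
      rcases hreach_rr c hcRr with h | h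
      · exact h
      · exact absurd h hcRl
    rw [hsucc1d] at hget
    simp only [hz, if_pos, hzo] at hget
    rw [List.getElem?_map, List.getElem?_map] at hget
    rcases hg0 : (H.succ c)[i]? with _ | w₀ <;> rw [hg0] at hget
    · simp at hget
    simp only [Option.map_some] at hget
    injection hget with hget
    have hw₀mem : w₀ ∈ H.succ c := List.mem_of_getElem? hg0
    rcases (hchild_hi c hcm.1 hcm.2 w₀ hw₀mem) with ⟨hlt, hm | ⟨hRl, hnone⟩⟩
    · left
      have hnR : ¬ H.Reach l w₀ := fun h => absurd (hreach_l w₀ h) (by omega)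
      have hψw : ψ w₀ = w₀ + off := by rw [hψd]; simp only [hnR, if_false]
      have hrdw : rd (w₀ + off) = w₀ + off := by
        rw [hrdd]
        have : w₀ + off ≠ φ l := by have := hoff (φ l) hφlV; omega
        simp only [this, if_false]
      have hw₀N : w₀ < N := by omega
      refine ⟨w₀, by rw [hzo]; exact hg0, hm, hw₀N, hnR, ?_, ?_⟩
      · rw [← hget, hψw, hrdw]
      · rw [← hget, hψw, hrdw]
        exact hcop_intro w₀ (by rw [hHV]; exact Finset.mem_range.2 hw₀N)
          (hcRr.tail ⟨hcV, hw₀mem⟩) hnR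
    · right
      have hψw : ψ w₀ = φ w₀ := by rw [hψd]; simp only [hRl, if_pos]
      have hφV : φ w₀ ∈ G.V := (hhom w₀ hRl).1
      obtain ⟨c', hc'⟩ := hvarcone w₀ hRl hnone (φ w₀) .refl
      have hne : φ w₀ ≠ φ l := by
        intro h
        rw [h, hφl_lab] at hc'
        simp at hc'
      have hrdw : rd (φ w₀) = φ w₀ := by rw [hrdd]; simp only [hne, if_false]
      rw [← hget, hψw, hrdw]
      exact ⟨hφV, hvarGood w₀ hRl hnone⟩
  have htgtV1 : tgt ∈ V1 := by
    rcases htgt_cases with ⟨_, h⟩ | ⟨_, h, _⟩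
    · exact Finset.mem_union_left _ h
    · exact Finset.mem_union_right _ h
  have hsucc1V1 : ∀ z ∈ V1, ∀ w ∈ succ1 z, w ∈ V1 := by
    intro z hz w hw
    by_cases hzc : z ∈ copies
    · obtain ⟨i, hget⟩ := List.mem_iff_getElem?.1 hw
      rcases hcopy_child z hzc i w hget with ⟨w₀, _, _, _, _, _, hwc⟩ | ⟨hwG, _⟩
      · exact Finset.mem_union_right _ hwc
      · exact Finset.mem_union_left _ hwG
    · have hzG : z ∈ G.V := by
        rcases Finset.mem_union.1 hz with h | h
        · exact h
        · exact absurd h hzc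
      rw [hsucc1G z hzc] at hw
      obtain ⟨w₀, hw₀, rfl⟩ := List.mem_map.1 hw
      rw [hrdd]
      by_cases h : w₀ = φ l
      · simp only [h, if_pos]
        exact htgtV1
      · simp only [h, if_false]
        exact Finset.mem_union_left _ (hGsucc z hzG w₀ hw₀)
  have hroot1V1 : root1 ∈ V1 := by
    rw [hroot1d, hrdd]
    by_cases h : G.root = φ l
    · simp only [h, if_pos rfl]
      exact htgtV1
    · simp only [h, if_false]
      exact Finset.mem_union_left _ hGroot
  have hrootIV : root1 ∈ I.V := by
    rw [hIV]
    exact Finset.mem_filter.2 ⟨hroot1V1, .refl⟩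
  have hstepIV : ∀ z ∈ I.V, ∀ w ∈ succ1 z, w ∈ I.V := by
    intro z hz w hw
    rw [hIV] at hz ⊢
    obtain ⟨hz1, hz2⟩ := Finset.mem_filter.1 hz
    exact Finset.mem_filter.2 ⟨hsucc1V1 z hz1 w hw, hz2.tail ⟨hz1, hw⟩⟩
  have hIfollow : ∀ p z v, z ∈ I.V → TGraph.follow I z p = some v → v ∈ I.V := by
    intro p
    induction p with
    | nil =>
        intro z v hz hv
        rw [follow_nil] at hv
        injection hv with hv
        exact hv ▸ hz
    | cons i p ih =>
        intro z v hz hv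
        rw [follow_cons] at hv
        rcases hg : (I.succ z)[i]? with _ | w <;> rw [hg] at hv
        · simp at hv
        · rw [Option.bind_some] at hv
          refine ih w v ?_ hv
          refine hstepIV z hz w ?_
          rw [← hIsucc]
          exact List.mem_of_getElem? hg
  have hGoodChild : ∀ u, u ∈ I.V → Good u → ∀ w ∈ succ1 u, Good w := by
    intro u hu hg w hw
    rw [hGoodd]
    intro w₂ h₂
    exact hg w₂ (Relation.ReflTransGen.head ⟨hu, by rw [hIsucc]; exact hw⟩ h₂)
  have hclass : ∀ p v, TGraph.follow I root1 p = some v →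
      Good v ∨ (v ∈ G.V ∧ TGraph.follow G G.root p = some v) ∨ v ∈ copies := by
    intro p
    induction p using List.reverseRecOn with
    | nil =>
        intro v hv
        rw [follow_nil] at hv
        injection hv with hv
        subst hv
        rw [hroot1d, hrdd]
        by_cases hgr : G.root = φ l
        · simp only [hgr, if_pos]
          rcases htgt_cases with ⟨hg, _⟩ | ⟨_, hc, _⟩
          · exact Or.inl hg
          · exact Or.inr (Or.inr hc)
        · simp only [hgr, if_false]
          exact Or.inr (Or.inl ⟨hGroot, follow_nil G G.root⟩)
    | append_singleton p' i ih =>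
        intro v hv
        rw [follow_append] at hv
        rcases hu : TGraph.follow I root1 p' with _ | u <;> rw [hu] at hv
        · simp at hv
        rw [Option.bind_some, hIsucc] at hv
        have huI : u ∈ I.V := hIfollow p' root1 u hrootIV hu
        rcases ih u hu with hGu | ⟨huG, hupath⟩ | huc
        · exact Or.inl (hGoodChild u huI hGu v (List.mem_of_getElem? hv))
        · rw [hsucc1G u (hdisj u huG)] at hv
          rw [List.getElem?_map] at hv
          rcases hg0 : (G.succ u)[i]? with _ | w₀ <;> rw [hg0] at hv
          · simp at hv
          simp only [Option.map_some] at hv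
          injection hv with hv
          by_cases hw₀ : w₀ = φ l
          · have hvt : v = tgt := by rw [← hv, hrdd]; simp only [hw₀, if_pos]
            subst hvt
            rcases htgt_cases with ⟨hg, _⟩ | ⟨_, hc, _⟩
            · exact Or.inl hg
            · exact Or.inr (Or.inr hc)
          · have hvw : v = w₀ := by rw [← hv, hrdd]; simp only [hw₀, if_false]
            subst hvw
            refine Or.inr (Or.inl ⟨hGsucc u huG _ (List.mem_of_getElem? hg0), ?_⟩)
            rw [follow_append, hupath, Option.bind_some]
            exact hg0
        · rcases hcopy_child u huc i v hv with ⟨w₀, _, _, _, _, _, hwc⟩ | ⟨hwG, hGv⟩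
          · exact Or.inr (Or.inr hwc)
          · exact Or.inl hGv
  have hLroot : ∀ q' (j : ℕ) u, TGraph.follow I root1 q' = some u →
      (succ1 u)[j]? = some root1 → Good root1 := by
    intro q' j u hu hget
    rcases hclass q' u hu with hGu | ⟨huG, hupath⟩ | huc
    · exact hGoodChild u (hIfollow q' root1 u hrootIV hu) hGu root1 (List.mem_of_getElem? hget)
    · rw [hsucc1G u (hdisj u huG), List.getElem?_map] at hget
      rcases hg0 : (G.succ u)[j]? with _ | w₀ <;> rw [hg0] at hget
      · simp at hget
      simp only [Option.map_some] at hget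
      injection hget with hget
      by_cases hw₀ : w₀ = φ l
      · by_cases hgr : G.root = φ l
        · exfalso
          have h1 : TGraph.follow G G.root [] = some (φ l) := by rw [follow_nil, hgr]
          have h2 : TGraph.follow G G.root (q' ++ [j]) = some (φ l) := by
            rw [follow_append, hupath, Option.bind_some, hg0, hw₀]
          have hne : ([] : List ℕ) ≠ q' ++ [j] := by simp
          obtain ⟨c, hc⟩ := hcs (φ l) [] (q' ++ [j]) h1 h2 hne (φ l) .refl
          rw [hφl_lab] at hc
          simp at hc
        · have hrt : root1 = tgt := by rw [← hget, hrdd]; simp only [hw₀, if_pos]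
          have hr1 : root1 = G.root := by rw [hroot1d, hrdd]; simp only [hgr, if_false]
          rcases htgt_cases with ⟨hg, _⟩ | ⟨_, hc, _⟩
          · rw [hrt]; exact hg
          · refine absurd ?_ (hdisj G.root hGroot)
            rw [← hr1, hrt]
            exact hc
      · have hr0 : root1 = w₀ := by rw [← hget, hrdd]; simp only [hw₀, if_false]
        by_cases hgr : G.root = φ l
        · have hrt : root1 = tgt := by rw [hroot1d, hrdd]; simp only [hgr, if_pos]
          rcases htgt_cases with ⟨hg, _⟩ | ⟨_, hc, _⟩
          · rw [hrt]; exact hg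
          · exact absurd (hrt ▸ hc)
              (hdisj root1 (hr0 ▸ hGsucc u huG w₀ (List.mem_of_getElem? hg0)))
        · have hr1 : root1 = G.root := by rw [hroot1d, hrdd]; simp only [hgr, if_false]
          have h2 : TGraph.follow G G.root (q' ++ [j]) = some G.root := by
            rw [follow_append, hupath, Option.bind_some, hg0, ← hr0, hr1]
          have hne : ([] : List ℕ) ≠ q' ++ [j] := by simp
          have hcone : ConeCG G.root := by
            rw [hConed]
            intro w hw
            exact hcs G.root [] (q' ++ [j]) (follow_nil G G.root) h2 hne w hw
          rw [hr1]
          exact hGoodOf G.root hGroot hcone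
    · rcases hcopy_child u huc j root1 hget with ⟨w₀, hg0, hm0, hN0, hnR0, hr0, hrc⟩ |
        ⟨hwG, hGv⟩
      · exfalso
        by_cases hgr : G.root = φ l
        · have hrt : root1 = tgt := by rw [hroot1d, hrdd]; simp only [hgr, if_pos]
          rcases htgt_cases with ⟨_, htV⟩ | ⟨hteq, _, hnR, hmrr, hNrr⟩
          · exact hdisj tgt htV (hrt ▸ hrc)
          · have hw₀rr : w₀ = rr := by
              have : w₀ + off = rr + off := by rw [← hr0, hrt, hteq]
              omega
            subst hw₀rr
            obtain ⟨c0, hc0V, hc0Rr, hc0Rl, rfl⟩ := hcop_elim u huc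
            have hc0m : m ≤ c0 ∧ c0 < N := by
              rcases hreach_rr c0 hc0Rr with h | h
              · exact h
              · exact absurd h hc0Rl
            have hzo : c0 + off - off = c0 := by omega
            rw [hzo] at hg0
            have := hchild_hi c0 hc0m.1 hc0m.2 w₀ (List.mem_of_getElem? hg0)
            omega
        · have hr1 : root1 = G.root := by rw [hroot1d, hrdd]; simp only [hgr, if_false]
          exact hdisj G.root hGroot (hr1 ▸ hrc)
      · exact hGv
  have hU : ∀ p q v, TGraph.follow I root1 p = some v → TGraph.follow I root1 q = some v →
      p = q ∨ Good v := by
    intro p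
    induction p using List.reverseRecOn with
    | nil =>
        intro q v hp hq
        rw [follow_nil] at hp
        injection hp with hp
        subst hp
        rcases q.eq_nil_or_concat with rfl | ⟨q', j, rfl⟩
        · exact Or.inl rfl
        · rw [List.concat_eq_append, follow_append] at hq
          rcases hu : TGraph.follow I root1 q' with _ | u <;> rw [hu] at hq
          · simp at hq
          rw [Option.bind_some, hIsucc] at hq
          exact Or.inr (hLroot q' j u hu hq)
    | append_singleton p' i ih =>
        intro q v hp hq
        rw [follow_append] at hp
        rcases hu1 : TGraph.follow I root1 p' with _ | u₁ <;> rw [hu1] at hp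
        · simp at hp
        rw [Option.bind_some, hIsucc] at hp
        rcases q.eq_nil_or_concat with rfl | ⟨q', j, rfl⟩
        · rw [follow_nil] at hq
          injection hq with hq
          subst hq
          exact Or.inr (hLroot p' i u₁ hu1 hp)
        rw [List.concat_eq_append, follow_append] at hq
        rcases hu2 : TGraph.follow I root1 q' with _ | u₂ <;> rw [hu2] at hq
        · simp at hq
        rw [Option.bind_some, hIsucc] at hq
        rw [List.concat_eq_append]
        by_cases hGv : Good v
        · exact Or.inr hGv
        left
        have hu1I : u₁ ∈ I.V := hIfollow p' root1 u₁ hrootIV hu1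
        have hu2I : u₂ ∈ I.V := hIfollow q' root1 u₂ hrootIV hu2
        have hng1 : ¬ Good u₁ := fun h => hGv (hGoodChild u₁ hu1I h v (List.mem_of_getElem? hp))
        have hng2 : ¬ Good u₂ := fun h => hGv (hGoodChild u₂ hu2I h v (List.mem_of_getElem? hq))
        rcases hclass p' u₁ hu1 with h | ⟨hu1G, hpath1⟩ | hc1
        · exact absurd h hng1
        · rcases hclass q' u₂ hu2 with h | ⟨hu2G, hpath2⟩ | hc2
          · exact absurd h hng2
          -- Case A : both parents old vertices of G
          · rw [hsucc1G u₁ (hdisj _ hu1G), List.getElem?_map] at hp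
            rcases hg1 : (G.succ u₁)[i]? with _ | w₁ <;> rw [hg1] at hp
            · simp at hp
            simp only [Option.map_some] at hp
            injection hp with hp
            rw [hsucc1G u₂ (hdisj _ hu2G), List.getElem?_map] at hq
            rcases hg2 : (G.succ u₂)[j]? with _ | w₂ <;> rw [hg2] at hq
            · simp at hq
            simp only [Option.map_some] at hq
            injection hq with hq
            by_cases hvt : v = tgt
            · rcases htgt_cases with ⟨hg, _⟩ | ⟨hteq, htc, hnR, hmrr, hNrr⟩
              · exact absurd (hvt ▸ hg) hGv
              · have hvoff : off ≤ v := by rw [hvt, hteq]; omega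
                have hw1 : w₁ = φ l := by
                  by_contra hne
                  have hrdw : rd w₁ = w₁ := by rw [hrdd]; simp only [hne, if_false]
                  have hvG : v ∈ G.V := by
                    rw [← hp, hrdw]
                    exact hGsucc u₁ hu1G w₁ (List.mem_of_getElem? hg1)
                  have := hoff v hvG
                  omega
                have hw2 : w₂ = φ l := by
                  by_contra hne
                  have hrdw : rd w₂ = w₂ := by rw [hrdd]; simp only [hne, if_false]
                  have hvG : v ∈ G.V := by
                    rw [← hq, hrdw]
                    exact hGsucc u₂ hu2G w₂ (List.mem_of_getElem? hg2)
                  have := hoff v hvG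
                  omega
                by_cases hpq : p' ++ [i] = q' ++ [j]
                · exact hpq
                · exfalso
                  have h1 : TGraph.follow G G.root (p' ++ [i]) = some (φ l) := by
                    rw [follow_append, hpath1, Option.bind_some, hg1, hw1]
                  have h2 : TGraph.follow G G.root (q' ++ [j]) = some (φ l) := by
                    rw [follow_append, hpath2, Option.bind_some, hg2, hw2]
                  obtain ⟨c, hc⟩ := hcs (φ l) _ _ h1 h2 hpq (φ l) .refl
                  rw [hφl_lab] at hc
                  simp at hc
            · have hw1 : w₁ = v := by
                by_cases hne : w₁ = φ l
                · exfalso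
                  apply hvt
                  rw [← hp, hrdd]
                  simp only [hne, if_pos]
                · rw [← hp, hrdd]; simp only [hne, if_false]
              have hw2 : w₂ = v := by
                by_cases hne : w₂ = φ l
                · exfalso
                  apply hvt
                  rw [← hq, hrdd]
                  simp only [hne, if_pos]
                · rw [← hq, hrdd]; simp only [hne, if_false]
              by_cases hpq : p' ++ [i] = q' ++ [j]
              · exact hpq
              · exfalso
                have h1 : TGraph.follow G G.root (p' ++ [i]) = some v := by
                  rw [follow_append, hpath1, Option.bind_some, hg1, hw1]
                have h2 : TGraph.follow G G.root (q' ++ [j]) = some v := by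
                  rw [follow_append, hpath2, Option.bind_some, hg2, hw2]
                have hvG : v ∈ G.V := hw1 ▸ hGsucc u₁ hu1G w₁ (List.mem_of_getElem? hg1)
                have hcone : ConeCG v := by
                  rw [hConed]
                  intro w hw
                  exact hcs v _ _ h1 h2 hpq w hw
                exact hGv (hGoodOf v hvG hcone)
          -- Case B : first parent old, second parent a copy
          · exfalso
            rcases hcopy_child u₂ hc2 j v hq with ⟨w₂, hg2, hm2, hN2, hnR2, hveq, hvc⟩ |
              ⟨_, hGv'⟩
            · rw [hsucc1G u₁ (hdisj _ hu1G), List.getElem?_map] at hp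
              rcases hg1 : (G.succ u₁)[i]? with _ | w₁ <;> rw [hg1] at hp
              · simp at hp
              simp only [Option.map_some] at hp
              injection hp with hp
              by_cases hne : w₁ = φ l
              · have hvt : v = tgt := by rw [← hp, hrdd]; simp only [hne, if_pos]
                rcases htgt_cases with ⟨hg, _⟩ | ⟨hteq, _, hnR, hmrr, hNrr⟩
                · exact hGv (hvt ▸ hg)
                · have hw2rr : w₂ = rr := by
                    have : w₂ + off = rr + off := by rw [← hveq, hvt, hteq]
                    omega
                  subst hw2rr
                  obtain ⟨c₂, hc₂V, hc₂Rr, hc₂Rl, rfl⟩ := hcop_elim u₂ hc2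
                  have hc₂m : m ≤ c₂ ∧ c₂ < N := by
                    rcases hreach_rr c₂ hc₂Rr with h | h
                    · exact h
                    · exact absurd h hc₂Rl
                  have hzo : c₂ + off - off = c₂ := by omega
                  rw [hzo] at hg2
                  have := hchild_hi c₂ hc₂m.1 hc₂m.2 w₂ (List.mem_of_getElem? hg2)
                  omega
              · have hvw : v = w₁ := by rw [← hp, hrdd]; simp only [hne, if_false]
                exact hdisj v (hvw ▸ hGsucc u₁ hu1G w₁ (List.mem_of_getElem? hg1)) hvc
            · exact hGv hGv'
        · rcases hclass q' u₂ hu2 with h | ⟨hu2G, hpath2⟩ | hc2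
          · exact absurd h hng2
          -- Case C : first parent a copy, second parent old
          · exfalso
            rcases hcopy_child u₁ hc1 i v hp with ⟨w₁, hg1, hm1, hN1, hnR1, hveq, hvc⟩ |
              ⟨_, hGv'⟩
            · rw [hsucc1G u₂ (hdisj _ hu2G), List.getElem?_map] at hq
              rcases hg2 : (G.succ u₂)[j]? with _ | w₂ <;> rw [hg2] at hq
              · simp at hq
              simp only [Option.map_some] at hq
              injection hq with hq
              by_cases hne : w₂ = φ l
              · have hvt : v = tgt := by rw [← hq, hrdd]; simp only [hne, if_pos]
                rcases htgt_cases with ⟨hg, _⟩ | ⟨hteq, _, hnR, hmrr, hNrr⟩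
                · exact hGv (hvt ▸ hg)
                · have hw1rr : w₁ = rr := by
                    have : w₁ + off = rr + off := by rw [← hveq, hvt, hteq]
                    omega
                  subst hw1rr
                  obtain ⟨c₁, hc₁V, hc₁Rr, hc₁Rl, rfl⟩ := hcop_elim u₁ hc1
                  have hc₁m : m ≤ c₁ ∧ c₁ < N := by
                    rcases hreach_rr c₁ hc₁Rr with h | h
                    · exact h
                    · exact absurd h hc₁Rl
                  have hzo : c₁ + off - off = c₁ := by omega
                  rw [hzo] at hg1
                  have := hchild_hi c₁ hc₁m.1 hc₁m.2 w₁ (List.mem_of_getElem? hg1)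
                  omega
              · have hvw : v = w₂ := by rw [← hq, hrdd]; simp only [hne, if_false]
                exact hdisj v (hvw ▸ hGsucc u₂ hu2G w₂ (List.mem_of_getElem? hg2)) hvc
            · exact hGv hGv'
          -- Case D : both parents copies
          · rcases hcopy_child u₁ hc1 i v hp with ⟨w₁, hg1, hm1, hN1, _, hveq1, _⟩ |
              ⟨_, hGv'⟩
            · rcases hcopy_child u₂ hc2 j v hq with ⟨w₂, hg2, hm2, hN2, _, hveq2, _⟩ |
                ⟨_, hGv'⟩
              · have hw12 : w₁ = w₂ := by omega
                obtain ⟨c₁, hc₁V, hc₁Rr, hc₁Rl, hu1e⟩ := hcop_elim u₁ hc1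
                obtain ⟨c₂, hc₂V, hc₂Rr, hc₂Rl, hu2e⟩ := hcop_elim u₂ hc2
                have hc₁m : m ≤ c₁ ∧ c₁ < N := by
                  rcases hreach_rr c₁ hc₁Rr with h | h
                  · exact h
                  · exact absurd h hc₁Rl
                have hc₂m : m ≤ c₂ ∧ c₂ < N := by
                  rcases hreach_rr c₂ hc₂Rr with h | h
                  · exact h
                  · exact absurd h hc₂Rl
                rw [hu1e] at hg1
                rw [hu2e] at hg2
                have hzo1 : c₁ + off - off = c₁ := by omega
                have hzo2 : c₂ + off - off = c₂ := by omega
                rw [hzo1] at hg1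
                rw [hzo2] at hg2
                rw [hw12] at hg1
                obtain ⟨hceq, hijeq⟩ := huniq_hi c₁ i c₂ j w₂ hc₁m.1 hc₁m.2 hc₂m.1 hc₂m.2
                  hm2 hg1 hg2
                have hu12 : u₁ = u₂ := by rw [hu1e, hu2e, hceq]
                rw [← hu12] at hu2
                rcases ih q' u₁ hu1 hu2 with hpq | hGu
                · rw [hpq, hijeq]
                · exact absurd hGu hng1
              · exact absurd hGv' hGv
            · exact absurd hGv' hGv
  intro v p q hp hq hne
  rw [hIroot] at hp hq
  rcases hU p q v hp hq with h | h
  · exact absurd h hne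
  · intro w hw
    exact h w hw

theorem part2 (G : TGraph C F) (r : GRule C F) (φ : ℕ → ℕ)
    (hGroot : G.root ∈ G.V) (hGsucc : ∀ v ∈ G.V, ∀ w ∈ G.succ v, w ∈ G.V)
    (hcs : TGraph.ConstructorShared G)
    (hrwf : ∀ x ∈ r.rhs.varsL, x ∈ r.args.flatMap GTerm.varsL)
    (hredex : TGraph.IsRedex (ruleGraph r).1 (ruleGraph r).2.1 G φ) :
    TGraph.ConstructorShared
      (TGraph.fire G (ruleGraph r).1 (ruleGraph r).2.1 (ruleGraph r).2.2 φ) := by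
  classical
  obtain ⟨hhom, hvarcone⟩ := hredex
  set lhs : GTerm C F := GTerm.fn r.f r.args with hlhsd
  set vs : List ℕ := lhs.varsL.dedup with hvsd
  set n₀ : ℕ := vs.length with hn₀d
  set vm : ℕ → ℕ := fun x => vs.idxOf x with hvmd
  set s₀ : GB C F := ⟨n₀, fun _ => none, fun _ => []⟩ with hs₀d
  set P := buildT vm lhs s₀ with hPd
  set Q := buildT vm r.rhs P.2 with hQd
  set H := (ruleGraph r).1 with hHd
  have hHV : H.V = Finset.range Q.2.next := rfl
  have hHlab : H.lab = Q.2.lab := rfl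
  have hHsucc : H.succ = Q.2.succ := rfl
  have hHl : (ruleGraph r).2.1 = P.1 := rfl
  have hHrr : (ruleGraph r).2.2 = Q.1 := rfl
  have hs₀next : s₀.next = n₀ := rfl
  have hs₀succ : ∀ v, s₀.succ v = [] := fun _ => rfl
  have hs₀lab : ∀ v, s₀.lab v = none := fun _ => rfl
  have hvmlt : ∀ x ∈ lhs.varsL, vm x < n₀ := by
    intro x hx
    rw [hvmd, hn₀d]
    exact List.idxOf_lt_length_iff.2 (by rw [hvsd]; exact List.mem_dedup.2 hx)
  have SP := buildT_spec vm n₀ lhs s₀ (le_of_eq hs₀next.symm) hvmlt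
  rw [← hPd] at SP
  have hm0 : n₀ ≤ P.2.next := hs₀next ▸ SP.evol.next_le
  have hrhsvars : ∀ x ∈ r.rhs.varsL, x ∈ lhs.varsL := by
    intro x hx
    rw [hlhsd, GTerm.varsL_fn]
    exact hrwf x hx
  have SQ := buildT_spec vm n₀ r.rhs P.2 hm0 (fun x hx => hvmlt x (hrhsvars x hx))
  rw [← hQd] at SQ
  set m := P.2.next with hmd
  set N := Q.2.next with hNd
  have hmN : m ≤ N := SQ.evol.next_le
  have hl_cases : P.1 + 1 = m ∧ n₀ ≤ P.1 := by
    rcases SP.root_cases with ⟨x, hx, _, _⟩ | ⟨h1, h2⟩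
    · exact absurd hx (by rw [hlhsd]; simp)
    · exact ⟨h1, hs₀next ▸ h2⟩
  -- successors of nodes below n₀ are empty, labels are none
  have hlow : ∀ v, v < n₀ → Q.2.succ v = [] ∧ Q.2.lab v = none := by
    intro v hv
    have h1 := SQ.evol.stable v (Or.inl (by omega))
    have h2 := SP.evol.stable v (Or.inl (by rw [hs₀next]; omega))
    exact ⟨h1.2.trans (h2.2.trans (hs₀succ v)), h1.1.trans (h2.1.trans (hs₀lab v))⟩
  have hmid : ∀ v, n₀ ≤ v → v < m → Q.2.succ v = P.2.succ v ∧ Q.2.lab v = P.2.lab v := by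
    intro v h1 h2
    have h := SQ.evol.stable v (Or.inl h2)
    exact ⟨h.2, h.1⟩
  have hlabl : H.lab (ruleGraph r).2.1 = some (Sum.inr r.f) := by
    rw [hHlab, hHl]
    rw [(hmid P.1 hl_cases.2 (by omega)).2]
    exact SP.lab_fn r.f r.args hlhsd
  -- conversion of builder reachability into H-reachability
  have hbrel_reach : ∀ u v, Relation.ReflTransGen (brel m P.2.succ) u v → H.Reach u v := by
    intro u v h
    induction h with
    | refl => exact .refl
    | tail h1 h2 ih =>
        rename_i b c
        obtain ⟨hb1, hb2⟩ := h2
        refine ih.tail ⟨?_, ?_⟩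
        · rw [hHV]
          exact Finset.mem_range.2 (by omega)
        · rw [hHsucc]
          by_cases hbn : b < n₀
          · rw [(SP.evol.stable b (Or.inl (by rw [hs₀next]; omega))).2, hs₀succ] at hb2
            exact absurd hb2 List.not_mem_nil
          · rw [(hmid b (by omega) hb1).1]
            exact hb2
  have hreach_var : ∀ x ∈ lhs.varsL, H.Reach P.1 (vm x) := by
    intro x hx
    exact hbrel_reach _ _ (SP.reach_var x hx)
  have hreach_l : ∀ v, H.Reach (ruleGraph r).2.1 v → v < m := by
    rw [hHl]
    intro v h
    induction h with
    | refl => omega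
    | tail h1 h2 ih =>
        rename_i b c
        obtain ⟨hb1, hb2⟩ := h2
        rw [hHsucc] at hb2
        by_cases hbn : b < n₀
        · rw [(hlow b hbn).1] at hb2
          exact absurd hb2 List.not_mem_nil
        · rw [(hmid b (by omega) ih).1] at hb2
          have := (SP.evol.newNodes b (by rw [hs₀next]; omega) ih).2 c hb2
          omega
  have hrr_cases : (H.Reach (ruleGraph r).2.1 (ruleGraph r).2.2 ∧
      H.lab (ruleGraph r).2.2 = none) ∨ (m ≤ (ruleGraph r).2.2 ∧ (ruleGraph r).2.2 + 1 = N) := by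
    rw [hHl, hHrr]
    rcases SQ.root_cases with ⟨x, hx, hre, _⟩ | ⟨h1, h2⟩
    · left
      have hxv : x ∈ r.rhs.varsL := by rw [hx, GTerm.varsL_var]; exact List.mem_singleton.2 rfl
      have hxl : x ∈ lhs.varsL := hrhsvars x hxv
      have hvx : vm x < n₀ := hvmlt x hxl
      constructor
      · rw [hre]
        exact hreach_var x hxl
      · rw [hHlab, hre]
        exact (hlow (vm x) hvx).2
    · exact Or.inr ⟨h2, h1⟩
  have hchild_hi : ∀ v, m ≤ v → v < N → ∀ w ∈ H.succ v,
      w < v ∧ (m ≤ w ∨ (H.Reach (ruleGraph r).2.1 w ∧ H.lab w = none)) := by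
    intro v h1 h2 w hw
    rw [hHsucc] at hw
    obtain ⟨hlt, hc⟩ := (SQ.evol.newNodes v h1 h2).2 w hw
    refine ⟨hlt, ?_⟩
    rcases hc with h | ⟨h, x, hx, rfl⟩
    · exact Or.inl h
    · right
      have hxl : x ∈ lhs.varsL := hrhsvars x hx
      refine ⟨?_, ?_⟩
      · rw [hHl]
        exact hreach_var x hxl
      · rw [hHlab]
        exact (hlow (vm x) h).2
  have hreach_rr : ∀ v, H.Reach (ruleGraph r).2.2 v →
      (m ≤ v ∧ v < N) ∨ H.Reach (ruleGraph r).2.1 v := by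
    intro v h
    induction h with
    | refl =>
        rcases hrr_cases with ⟨h1, _⟩ | ⟨h1, _⟩
        · exact Or.inr h1
        · exact Or.inl ⟨h1, hHrr ▸ SQ.root_lt⟩
    | tail h1 h2 ih =>
        rename_i b c
        obtain ⟨hb1, hb2⟩ := h2
        rcases ih with ⟨hm1, hm2⟩ | hR
        · rcases (hchild_hi b hm1 hm2 c hb2).2 with h | ⟨h, _⟩
          · have := (hchild_hi b hm1 hm2 c hb2).1
            exact Or.inl ⟨h, by omega⟩
          · exact Or.inr h
        · exact Or.inr (hR.tail ⟨hb1, hb2⟩)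
  have huniq_hi : ∀ u₁ (i₁ : ℕ) u₂ (i₂ : ℕ) w, m ≤ u₁ → u₁ < N → m ≤ u₂ → u₂ < N → m ≤ w →
      (H.succ u₁)[i₁]? = some w → (H.succ u₂)[i₂]? = some w → u₁ = u₂ ∧ i₁ = i₂ := by
    intro u₁ i₁ u₂ i₂ w a1 a2 a3 a4 a5 a6 a7
    rw [hHsucc] at a6 a7
    exact SQ.evol.uniq u₁ i₁ u₂ i₂ w a1 a2 a3 a4 a5 a6 a7
  exact fire_CS G H (ruleGraph r).2.1 (ruleGraph r).2.2 φ r.f m N hGroot hGsucc hcs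
    hhom hvarcone hlabl hHV hreach_l (hHrr ▸ SQ.root_lt) hrr_cases hchild_hi
    hreach_rr huniq_hi

end Aux

/-- For every closed term t of an orthogonal constructor rewrite system, the tree
term graph 𝔾(t) is constructor-shared; moreover constructor-sharedness of closed
well-formed term graphs is preserved by one-step graph rewriting in the graph
rewrite system corresponding to the term rewrite system. -/
theorem constructor_sharedness {C F : Type} (arc : C → ℕ) (arf : F → ℕ)
    (Rs : Set (GRule C F)) (horth : Orthogonal arc arf Rs) :
    (∀ t : GTerm C F, GClosed t → GTerm.WFT arc arf t →
      TGraph.ConstructorShared (graphOfTerm t)) ∧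
    (∀ G I : TGraph C F, TGraph.WFG arc arf G → TGraph.ClosedG G →
      TGraph.ConstructorShared G → GStep Rs G I → TGraph.ConstructorShared I) := by
  constructor
  · intro t hcl _
    exact part1 t hcl
  · intro G I hwf hclosed hcs hstep
    cases hstep with
    | mk hr hredex =>
        rename_i r φ
        exact part2 G r φ hwf.root_mem hwf.succ_mem hcs
          ((horth.1 r hr).2.2.2.2.2) hredex
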